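/- There exists a constant C > 0 such that for all N ≥ 2, setting K = ⌈2N · log N⌉ (natural logarithm), the random-to-top shuffle satisfies, for every starting deck d (a permutation of Fin N): TV(μ_K(d), U) ≤ C/N, where U is the uniform distribution on the permutations of Fin N. -/

import Mathlib

open scoped ENNReal

/-- Total variation distance between two distributions: `(1/2) Σ_x |μ(x) − ν(x)|`. -/
noncomputable def tvDist {X : Type*} (μ ν : PMF X) : ℝ≥0∞ :=
  (1 / 2) * ∑' x, max (μ x - ν x) (ν x - μ x)

/-- The permutation of positions that cyclically shifts the block `0..j` one place to the right:
it sends `0 ↦ j`, `i ↦ i − 1` for `1 ≤ i ≤ j`, and fixes the positions above `j`. Composing a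
deck with this permutation moves the card at position `j` to the top and shifts the cards at
positions `0..j−1` down one place. -/
def moveToTop {N : ℕ} (j : Fin N) : Equiv.Perm (Fin N) :=
  (List.range (j : ℕ)).foldl
    (fun acc k =>
      Equiv.swap (⟨k % N, Nat.mod_lt k j.pos⟩ : Fin N)
          (⟨(k + 1) % N, Nat.mod_lt (k + 1) j.pos⟩ : Fin N) * acc)
    1

/-- One step of the random-to-top shuffle: sample a position `j` uniformly and move the card at
position `j` to the top of the deck. -/
noncomputable def rtopStep {N : ℕ} (h : 0 < N) (d : Equiv.Perm (Fin N)) :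
    PMF (Equiv.Perm (Fin N)) :=
  haveI : Nonempty (Fin N) := ⟨⟨0, h⟩⟩
  (PMF.uniformOfFintype (Fin N)).bind fun j => PMF.pure (d * moveToTop j)

/-- Distribution of the deck after `K` steps of the random-to-top shuffle starting from `d`. -/
noncomputable def rtopWalk {N : ℕ} (h : 0 < N) (d : Equiv.Perm (Fin N)) :
    ℕ → PMF (Equiv.Perm (Fin N))
  | 0 => PMF.pure d
  | (K + 1) => (rtopWalk h d K).bind (rtopStep h)

/-- The uniform distribution on permutations of `Fin N`. -/
noncomputable def uniformPerm (N : ℕ) : PMF (Equiv.Perm (Fin N)) :=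
  haveI : Nonempty (Equiv.Perm (Fin N)) := ⟨1⟩
  PMF.uniformOfFintype (Equiv.Perm (Fin N))


open Classical

namespace RTT

variable {N : ℕ}

lemma foldl_formula (j : Fin N) (n : ℕ) (hn : n ≤ (j : ℕ)) (i : Fin N) :
    (((List.range n).foldl
      (fun acc k =>
        Equiv.swap (⟨k % N, Nat.mod_lt k j.pos⟩ : Fin N)
            (⟨(k + 1) % N, Nat.mod_lt (k + 1) j.pos⟩ : Fin N) * acc)
      1) i : ℕ) =
    if (i : ℕ) = 0 then n else if (i : ℕ) ≤ n then (i : ℕ) - 1 else (i : ℕ) := by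
  induction n with
  | zero =>
    simp only [List.range_zero, List.foldl_nil, Equiv.Perm.coe_one, id_eq]
    rcases Nat.eq_zero_or_pos (i : ℕ) with h | h
    · simp [h]
    · rw [if_neg (by omega), if_neg (by omega)]
  | succ n ih =>
    have hn' : n ≤ (j : ℕ) := by omega
    have hnN : n < N := by have := j.isLt; omega
    have hn1N : n + 1 < N := by omega
    rw [List.range_succ, List.foldl_append, List.foldl_cons, List.foldl_nil]
    simp only [Equiv.Perm.mul_apply]
    have hv := ih hn'
    set v := (((List.range n).foldl
      (fun acc k =>
        Equiv.swap (⟨k % N, Nat.mod_lt k j.pos⟩ : Fin N)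
            (⟨(k + 1) % N, Nat.mod_lt (k + 1) j.pos⟩ : Fin N) * acc)
      1) i) with hvdef
    have ha : (⟨n % N, Nat.mod_lt n j.pos⟩ : Fin N) = ⟨n, hnN⟩ := by
      ext; simp [Nat.mod_eq_of_lt hnN]
    have hb : (⟨(n+1) % N, Nat.mod_lt (n+1) j.pos⟩ : Fin N) = ⟨n+1, hn1N⟩ := by
      ext; simp [Nat.mod_eq_of_lt hn1N]
    rw [ha, hb]
    rcases Nat.eq_zero_or_pos (i : ℕ) with h0 | h0
    · -- v = n
      have : v = ⟨n, hnN⟩ := by ext; rw [hv]; simp [h0]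
      rw [this, Equiv.swap_apply_left]
      simp [h0]
    · by_cases hle : (i : ℕ) ≤ n
      · -- v = i - 1 < n
        have : v = ⟨(i:ℕ) - 1, by omega⟩ := by ext; rw [hv]; simp [hle]; omega
        rw [this, Equiv.swap_apply_of_ne_of_ne (by simp [Fin.ext_iff]; omega)
          (by simp [Fin.ext_iff]; omega)]
        simp only []
        rw [if_neg (by omega), if_pos (by omega)]
      · by_cases heq : (i : ℕ) = n + 1
        · have : v = ⟨n+1, hn1N⟩ := by
            ext; rw [hv, if_neg (by omega), if_neg (by omega)]; exact heq
          rw [this, Equiv.swap_apply_right]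
          simp only []
          rw [if_neg (by omega), if_pos (by omega)]
          omega
        · have : v = i := by ext; rw [hv, if_neg (by omega), if_neg (by omega)]
          rw [this, Equiv.swap_apply_of_ne_of_ne (by simp [Fin.ext_iff]; omega)
            (by simp [Fin.ext_iff]; omega)]
          rw [if_neg (by omega), if_neg (by omega)]

lemma moveToTop_apply (j i : Fin N) :
    ((moveToTop j i : Fin N) : ℕ) =
    if (i : ℕ) = 0 then (j:ℕ) else if (i : ℕ) ≤ (j:ℕ) then (i : ℕ) - 1 else (i : ℕ) :=
  foldl_formula j j le_rfl i

lemma moveToTop_symm_apply (j i : Fin N) :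
    (((moveToTop j).symm i : Fin N) : ℕ) =
    if (i : ℕ) = (j : ℕ) then 0 else if (i : ℕ) < (j:ℕ) then (i : ℕ) + 1 else (i : ℕ) := by
  have key : moveToTop j ((moveToTop j).symm i) = i := Equiv.apply_symm_apply _ _
  have := moveToTop_apply j ((moveToTop j).symm i)
  set w := ((moveToTop j).symm i) with hw
  rw [key] at this
  by_cases h0 : (w : ℕ) = 0
  · rw [h0, if_pos rfl] at this
    rw [if_pos this]; exact h0
  · rw [if_neg h0] at this
    by_cases hle : (w : ℕ) ≤ (j : ℕ)
    · rw [if_pos hle] at this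
      rw [if_neg (by omega), if_pos (by omega)]; omega
    · rw [if_neg hle] at this
      rw [if_neg (by omega), if_neg (by omega)]; omega



/-- move card `c` to the top of deck `d`. -/
def stepCard (c : Fin N) (d : Equiv.Perm (Fin N)) : Equiv.Perm (Fin N) :=
  d * moveToTop (d⁻¹ c)

lemma stepCard_inv_apply (c : Fin N) (d : Equiv.Perm (Fin N)) (x : Fin N) :
    (((stepCard c d)⁻¹ x : Fin N) : ℕ) =
    if x = c then 0
    else if ((d⁻¹ x : Fin N) : ℕ) < ((d⁻¹ c : Fin N) : ℕ) then ((d⁻¹ x : Fin N) : ℕ) + 1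
    else ((d⁻¹ x : Fin N) : ℕ) := by
  have h1 : (stepCard c d)⁻¹ x = (moveToTop (d⁻¹ c))⁻¹ (d⁻¹ x) := by
    simp [stepCard, mul_inv_rev]
  rw [h1]
  have h2 : (moveToTop (d⁻¹ c))⁻¹ = (moveToTop (d⁻¹ c)).symm := rfl
  rw [h2, moveToTop_symm_apply]
  have h3 : (((d⁻¹ x : Fin N) : ℕ) = ((d⁻¹ c : Fin N) : ℕ)) ↔ x = c := by
    rw [Fin.val_eq_val]
    constructor
    · intro h; exact d⁻¹.injective h
    · intro h; rw [h]
  by_cases hxc : x = c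
  · rw [if_pos (h3.2 hxc), if_pos hxc]
  · rw [if_neg (fun h => hxc (h3.1 h)), if_neg hxc]

/-- Coupling invariant: cards in `T` occupy the same positions, all below `T.card`. -/
def Inv (d e : Equiv.Perm (Fin N)) (T : Finset (Fin N)) : Prop :=
  ∀ c ∈ T, d⁻¹ c = e⁻¹ c ∧ ((d⁻¹ c : Fin N) : ℕ) < T.card

lemma pos_ge_of_not_mem (d : Equiv.Perm (Fin N)) (T : Finset (Fin N))
    (h : ∀ t ∈ T, ((d⁻¹ t : Fin N) : ℕ) < T.card) {c : Fin N} (hc : c ∉ T) :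
    T.card ≤ ((d⁻¹ c : Fin N) : ℕ) := by
  by_contra hlt
  push_neg at hlt
  have hTN : T.card ≤ N := by
    simpa using Finset.card_le_univ T
  set S : Finset (Fin N) := T.image (fun t => d⁻¹ t) with hS
  set P : Finset (Fin N) := Finset.univ.filter (fun q : Fin N => (q : ℕ) < T.card) with hP
  have hSP : S ⊆ P := by
    intro q hq
    rw [hS, Finset.mem_image] at hq
    obtain ⟨t, ht, rfl⟩ := hq
    rw [hP, Finset.mem_filter]
    exact ⟨Finset.mem_univ _, h t ht⟩
  have hScard : S.card = T.card := Finset.card_image_of_injective _ d⁻¹.injective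
  have hPcard : P.card = T.card := by
    have himg : P.image Fin.val = Finset.range T.card := by
      ext k
      simp only [Finset.mem_image, Finset.mem_range, hP, Finset.mem_filter,
        Finset.mem_univ, true_and]
      constructor
      · rintro ⟨q, hq, rfl⟩; exact hq
      · intro hk; exact ⟨⟨k, lt_of_lt_of_le hk hTN⟩, hk, rfl⟩
    have := Finset.card_image_of_injective P (Fin.val_injective)
    rw [himg, Finset.card_range] at this
    exact this.symm
  have hSeqP : S = P := Finset.eq_of_subset_of_card_le hSP (by rw [hScard, hPcard])
  have : d⁻¹ c ∈ P := by
    rw [hP, Finset.mem_filter]; exact ⟨Finset.mem_univ _, hlt⟩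
  rw [← hSeqP, hS, Finset.mem_image] at this
  obtain ⟨t, ht, het⟩ := this
  exact hc (by rwa [d⁻¹.injective het] at ht)

lemma inv_step {d e : Equiv.Perm (Fin N)} {T : Finset (Fin N)}
    (h : Inv d e T) (c : Fin N) :
    Inv (stepCard c d) (stepCard c e) (insert c T) := by
  intro x hx
  have hcard_pos : 0 < (insert c T).card :=
    Finset.card_pos.2 ⟨c, Finset.mem_insert_self c T⟩
  by_cases hxc : x = c
  · constructor
    · apply Fin.val_injective
      rw [stepCard_inv_apply, stepCard_inv_apply, if_pos hxc, if_pos hxc]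
    · rw [stepCard_inv_apply, if_pos hxc]; exact hcard_pos
  · have hxT : x ∈ T := by
      rcases Finset.mem_insert.1 hx with h' | h'
      · exact absurd h' hxc
      · exact h'
    obtain ⟨hpos, hlt⟩ := h x hxT
    by_cases hcT : c ∈ T
    · obtain ⟨hcpos, hclt⟩ := h c hcT
      have hcardeq : (insert c T).card = T.card := by
        rw [Finset.insert_eq_self.2 hcT]
      constructor
      · apply Fin.val_injective
        rw [stepCard_inv_apply, stepCard_inv_apply, if_neg hxc, if_neg hxc,
          hpos, hcpos]
      · rw [stepCard_inv_apply, if_neg hxc, hcardeq]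
        by_cases hb : ((d⁻¹ x : Fin N) : ℕ) < ((d⁻¹ c : Fin N) : ℕ)
        · rw [if_pos hb]; omega
        · rw [if_neg hb]; exact hlt
    · have hdg : T.card ≤ ((d⁻¹ c : Fin N) : ℕ) :=
        pos_ge_of_not_mem d T (fun t ht => (h t ht).2) hcT
      have heg : T.card ≤ ((e⁻¹ c : Fin N) : ℕ) :=
        pos_ge_of_not_mem e T (fun t ht => ((h t ht).1 ▸ (h t ht).2)) hcT
      have hcardeq : (insert c T).card = T.card + 1 :=
        Finset.card_insert_of_notMem hcT
      have hd_branch : ((d⁻¹ x : Fin N) : ℕ) < ((d⁻¹ c : Fin N) : ℕ) := by omega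
      have he_branch : ((e⁻¹ x : Fin N) : ℕ) < ((e⁻¹ c : Fin N) : ℕ) := by
        rw [← hpos]; omega
      constructor
      · apply Fin.val_injective
        rw [stepCard_inv_apply, stepCard_inv_apply, if_neg hxc, if_neg hxc,
          if_pos hd_branch, if_pos he_branch, hpos]
      · rw [stepCard_inv_apply, if_neg hxc, if_pos hd_branch, hcardeq]
        omega

/-- run a sequence of card moves. -/
def runC (d : Equiv.Perm (Fin N)) (l : List (Fin N)) : Equiv.Perm (Fin N) :=
  l.foldl (fun e c => stepCard c e) d

@[simp] lemma runC_nil (d : Equiv.Perm (Fin N)) : runC d [] = d := rfl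

lemma runC_cons (d : Equiv.Perm (Fin N)) (c : Fin N) (l : List (Fin N)) :
    runC d (c :: l) = runC (stepCard c d) l := rfl

lemma runC_append (d : Equiv.Perm (Fin N)) (l : List (Fin N)) (c : Fin N) :
    runC d (l ++ [c]) = stepCard c (runC d l) := by
  simp [runC, List.foldl_append]

lemma inv_run (l : List (Fin N)) :
    ∀ (d e : Equiv.Perm (Fin N)) (T : Finset (Fin N)), Inv d e T →
      Inv (runC d l) (runC e l) (T ∪ l.toFinset) := by
  induction l with
  | nil => intro d e T h; simpa using h
  | cons c l ih =>
    intro d e T h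
    have h1 := ih (stepCard c d) (stepCard c e) (insert c T) (inv_step h c)
    have : insert c T ∪ l.toFinset = T ∪ (c :: l).toFinset := by
      rw [List.toFinset_cons]
      ext y
      simp only [Finset.mem_union, Finset.mem_insert]
      tauto
    rw [runC_cons, runC_cons]
    rwa [this] at h1

lemma run_eq_of_cover {l : List (Fin N)} (hl : ∀ c : Fin N, c ∈ l)
    (d e : Equiv.Perm (Fin N)) : runC d l = runC e l := by
  have h0 : Inv d e (∅ : Finset (Fin N)) := fun c hc => absurd hc (Finset.notMem_empty c)
  have h1 := inv_run l d e ∅ h0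
  have : ∀ x : Fin N, (runC d l)⁻¹ x = (runC e l)⁻¹ x := by
    intro x
    exact (h1 x (by simp [List.mem_toFinset.2 (hl x)])).1
  have hinv : (runC d l)⁻¹ = (runC e l)⁻¹ := Equiv.ext this
  exact inv_injective hinv



end RTT

namespace RTT

variable {α β γ : Type*}

lemma expect_bind (μ : PMF α) (g : α → PMF β) (f : β → ℝ≥0∞) :
    ∑' b, (μ.bind g) b * f b = ∑' a, μ a * ∑' b, (g a) b * f b := by
  have step1 : ∑' b, (μ.bind g) b * f b = ∑' (b : β) (a : α), μ a * (g a) b * f b := by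
    congr 1; ext b
    rw [PMF.bind_apply, ENNReal.tsum_mul_right]
  rw [step1, ENNReal.tsum_comm]
  congr 1; ext a
  rw [← ENNReal.tsum_mul_left]
  congr 1; ext b
  rw [mul_assoc]

lemma expect_map (μ : PMF α) (h : α → β) (f : β → ℝ≥0∞) :
    ∑' b, (μ.map h) b * f b = ∑' a, μ a * f (h a) := by
  rw [PMF.map, expect_bind]
  congr 1; ext a
  congr 1
  rw [tsum_eq_single (h a) (fun b hb => by simp [PMF.pure_apply, hb])]
  simp [PMF.pure_apply]

/-- coupling bound: TV of two pushforwards of the same measure. -/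
lemma tv_map_map (μ : PMF α) (f g : α → β) :
    tvDist (μ.map f) (μ.map g) ≤ ∑' a, μ a * (if f a = g a then 0 else 1) := by
  have hind : ∀ (u : α → β) (b : β), (μ.map u) b = ∑' a, μ a * (if u a = b then 1 else 0) := by
    intro u b
    rw [PMF.map_apply]
    congr 1; ext a
    by_cases h : u a = b
    · simp [h]
    · simp [h, Ne.symm h]
  have key : ∀ b : β,
      max ((μ.map f) b - (μ.map g) b) ((μ.map g) b - (μ.map f) b) ≤
      (∑' a, μ a * (if f a = b ∧ g a ≠ b then 1 else 0)) +
      (∑' a, μ a * (if g a = b ∧ f a ≠ b then 1 else 0)) := by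
    intro b
    have h1 : (μ.map f) b - (μ.map g) b ≤
        ∑' a, μ a * (if f a = b ∧ g a ≠ b then 1 else 0) := by
      rw [tsub_le_iff_right, hind f b, hind g b, ← ENNReal.tsum_add]
      apply ENNReal.tsum_le_tsum
      intro a
      rw [← mul_add]
      apply mul_le_mul_right
      by_cases h1 : f a = b <;> by_cases h2 : g a = b <;> simp [h1, h2]
    have h2 : (μ.map g) b - (μ.map f) b ≤
        ∑' a, μ a * (if g a = b ∧ f a ≠ b then 1 else 0) := by
      rw [tsub_le_iff_right, hind g b, hind f b, ← ENNReal.tsum_add]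
      apply ENNReal.tsum_le_tsum
      intro a
      rw [← mul_add]
      apply mul_le_mul_right
      by_cases h1 : f a = b <;> by_cases h2 : g a = b <;> simp [h1, h2]
    exact max_le (h1.trans le_self_add) (h2.trans le_add_self)
  calc tvDist (μ.map f) (μ.map g)
      ≤ (1/2) * ∑' b, ((∑' a, μ a * (if f a = b ∧ g a ≠ b then 1 else 0)) +
          (∑' a, μ a * (if g a = b ∧ f a ≠ b then 1 else 0))) :=
        mul_le_mul_right (ENNReal.tsum_le_tsum key) _
    _ = (1/2) * (∑' a, μ a * ((∑' b, (if f a = b ∧ g a ≠ b then 1 else 0)) +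
          (∑' b, (if g a = b ∧ f a ≠ b then 1 else 0)))) := by
        rw [ENNReal.tsum_add]
        rw [ENNReal.tsum_comm (f := fun b a => μ a * (if f a = b ∧ g a ≠ b then 1 else 0)),
          ENNReal.tsum_comm (f := fun b a => μ a * (if g a = b ∧ f a ≠ b then 1 else 0))]
        rw [← ENNReal.tsum_add]
        congr 2; ext a
        rw [ENNReal.tsum_mul_left, ENNReal.tsum_mul_left, ← mul_add]
    _ ≤ ∑' a, μ a * (if f a = g a then 0 else 1) := by
        rw [← ENNReal.tsum_mul_left]
        apply ENNReal.tsum_le_tsum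
        intro a
        rw [← mul_assoc, mul_comm (1/2 : ℝ≥0∞) (μ a), mul_assoc]
        apply mul_le_mul_right
        by_cases h : f a = g a
        · simp [h]
        · have e1 : (∑' b, (if f a = b ∧ g a ≠ b then (1:ℝ≥0∞) else 0)) = 1 := by
            rw [tsum_eq_single (f a) ?_]
            · simp only [eq_self_iff_true, true_and, ne_eq]
              rw [if_pos (fun hh => h hh.symm)]
            · intro b hb; simp only [ite_eq_right_iff, and_imp]
              intro h1 _; exact absurd h1.symm hb
          have e2 : (∑' b, (if g a = b ∧ f a ≠ b then (1:ℝ≥0∞) else 0)) = 1 := by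
            rw [tsum_eq_single (g a) ?_]
            · simp only [eq_self_iff_true, true_and, ne_eq]
              rw [if_pos (fun hh => h hh)]
            · intro b hb; simp only [ite_eq_right_iff, and_imp]
              intro h1 _; exact absurd h1.symm hb
          rw [e1, e2, if_neg h]
          rw [show ((1:ℝ≥0∞) + 1) = 2 by norm_num, one_div,
            ENNReal.inv_mul_cancel (by norm_num) (by norm_num)]

/-- convexity: TV to a mixture. -/
lemma tv_bind_le (μ : PMF β) (ν : PMF α) (f : α → PMF β) (c : ℝ≥0∞)
    (h : ∀ a, tvDist μ (f a) ≤ c) : tvDist μ (ν.bind f) ≤ c := by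
  have key : ∀ b : β,
      max (μ b - (ν.bind f) b) ((ν.bind f) b - μ b) ≤
      ∑' a, ν a * max (μ b - (f a) b) ((f a) b - μ b) := by
    intro b
    have hμ : μ b = ∑' a, ν a * μ b := by
      rw [ENNReal.tsum_mul_right, ν.tsum_coe, one_mul]
    have hB : (ν.bind f) b = ∑' a, ν a * (f a) b := PMF.bind_apply _ _ _
    have h1 : μ b - (ν.bind f) b ≤ ∑' a, ν a * (μ b - (f a) b) := by
      rw [tsub_le_iff_right, hB, ← ENNReal.tsum_add]
      calc μ b = ∑' a, ν a * μ b := hμ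
        _ ≤ ∑' a, (ν a * (μ b - (f a) b) + ν a * (f a) b) := by
            apply ENNReal.tsum_le_tsum
            intro a
            rw [← mul_add]
            exact mul_le_mul_right le_tsub_add _
    have h2 : (ν.bind f) b - μ b ≤ ∑' a, ν a * ((f a) b - μ b) := by
      rw [tsub_le_iff_right]
      calc (ν.bind f) b = ∑' a, ν a * (f a) b := hB
        _ ≤ ∑' a, (ν a * ((f a) b - μ b) + ν a * μ b) := by
            apply ENNReal.tsum_le_tsum
            intro a
            rw [← mul_add]
            exact mul_le_mul_right le_tsub_add _
        _ = (∑' a, ν a * ((f a) b - μ b)) + ∑' a, ν a * μ b := ENNReal.tsum_add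
        _ = (∑' a, ν a * ((f a) b - μ b)) + μ b := by rw [← hμ]
    refine max_le (h1.trans ?_) (h2.trans ?_)
    · exact ENNReal.tsum_le_tsum fun a => mul_le_mul_right (le_max_left _ _) _
    · exact ENNReal.tsum_le_tsum fun a => mul_le_mul_right (le_max_right _ _) _
  calc tvDist μ (ν.bind f)
      ≤ (1/2) * ∑' b, ∑' a, ν a * max (μ b - (f a) b) ((f a) b - μ b) :=
        mul_le_mul_right (ENNReal.tsum_le_tsum key) _
    _ = ∑' a, ν a * tvDist μ (f a) := by
        rw [ENNReal.tsum_comm (f := fun b a => ν a * max (μ b - (f a) b) ((f a) b - μ b))]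
        rw [← ENNReal.tsum_mul_left]
        congr 1; ext a
        unfold tvDist
        rw [ENNReal.tsum_mul_left]
        ring
    _ ≤ ∑' a, ν a * c := ENNReal.tsum_le_tsum fun a => mul_le_mul_right (h a) _
    _ = c := by rw [ENNReal.tsum_mul_right, ν.tsum_coe, one_mul]



end RTT

namespace RTT

variable {N : ℕ}

/-- card form of one step. -/
lemma rtopStep_eq_card (h : 0 < N) (d : Equiv.Perm (Fin N)) :
    rtopStep h d =
      (haveI : Nonempty (Fin N) := ⟨⟨0, h⟩⟩
       (PMF.uniformOfFintype (Fin N)).map fun c => stepCard c d) := by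
  haveI : Nonempty (Fin N) := ⟨⟨0, h⟩⟩
  ext σ
  rw [rtopStep, PMF.map, PMF.bind_apply, PMF.bind_apply]
  simp only [Function.comp_apply]
  rw [← Equiv.tsum_eq (d : Fin N ≃ Fin N)
    (fun c => PMF.uniformOfFintype (Fin N) c * (PMF.pure (stepCard c d)) σ)]
  apply tsum_congr
  intro j
  have hs : stepCard (d j) d = d * moveToTop j := by
    unfold stepCard
    congr 2
    simp
  rw [hs]
  congr 1
  simp [PMF.uniformOfFintype_apply]

/-- PMF on words of length K. -/
noncomputable def wpmf (h : 0 < N) : ℕ → PMF (List (Fin N))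
  | 0 => PMF.pure []
  | (K + 1) => (wpmf h K).bind fun l =>
      haveI : Nonempty (Fin N) := ⟨⟨0, h⟩⟩
      (PMF.uniformOfFintype (Fin N)).map fun c => l ++ [c]

lemma rtopWalk_eq_map (h : 0 < N) (d : Equiv.Perm (Fin N)) (K : ℕ) :
    rtopWalk h d K = (wpmf h K).map (runC d) := by
  haveI : Nonempty (Fin N) := ⟨⟨0, h⟩⟩
  induction K with
  | zero =>
    rw [rtopWalk, wpmf, PMF.pure_map]
    rfl
  | succ K ih =>
    rw [rtopWalk, wpmf, ih, PMF.bind_map, PMF.map_bind]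
    apply congrArg
    funext l
    rw [Function.comp_apply, rtopStep_eq_card, PMF.map_comp]
    have hfun : (fun c : Fin N => stepCard c (runC d l)) = runC d ∘ fun c => l ++ [c] :=
      funext fun c => (runC_append d l c).symm
    rw [hfun]

/-- uniform is stationary for a single step. -/
lemma uniform_bind_step (h : 0 < N) :
    (uniformPerm N).bind (rtopStep h) = uniformPerm N := by
  haveI : Nonempty (Fin N) := ⟨⟨0, h⟩⟩
  haveI : Nonempty (Equiv.Perm (Fin N)) := ⟨1⟩
  ext σ
  rw [PMF.bind_apply]
  have hval : ∀ d : Equiv.Perm (Fin N),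
      (rtopStep h d) σ = ∑' j : Fin N,
        (PMF.uniformOfFintype (Fin N)) j * (if σ = d * moveToTop j then 1 else 0) := by
    intro d
    rw [rtopStep, PMF.bind_apply]
    apply tsum_congr
    intro j
    congr 1
    rw [PMF.pure_apply]
    congr
  calc ∑' d, (uniformPerm N) d * (rtopStep h d) σ
      = ∑' (d : Equiv.Perm (Fin N)) (j : Fin N), (uniformPerm N) d *
          ((PMF.uniformOfFintype (Fin N)) j * (if σ = d * moveToTop j then 1 else 0)) := by
        apply tsum_congr
        intro d
        rw [hval d, ENNReal.tsum_mul_left]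
    _ = ∑' (j : Fin N) (d : Equiv.Perm (Fin N)), (uniformPerm N) d *
          ((PMF.uniformOfFintype (Fin N)) j * (if σ = d * moveToTop j then 1 else 0)) :=
        ENNReal.tsum_comm
    _ = ∑' (j : Fin N), (PMF.uniformOfFintype (Fin N)) j * (uniformPerm N) σ := by
        apply tsum_congr
        intro j
        rw [tsum_eq_single (σ * (moveToTop j)⁻¹) ?_]
        · rw [if_pos (by group), mul_one, mul_comm]
          congr 1
          simp [uniformPerm, PMF.uniformOfFintype_apply]
        · intro d hd
          rw [if_neg ?_, mul_zero, mul_zero]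
          intro hσ
          apply hd
          rw [hσ]; group
    _ = (uniformPerm N) σ := by
        rw [ENNReal.tsum_mul_right, (PMF.uniformOfFintype (Fin N)).tsum_coe, one_mul]

/-- uniform is the mixture of walks from uniform starts. -/
lemma uniform_eq_mixture (h : 0 < N) (K : ℕ) :
    (uniformPerm N).bind (fun e => rtopWalk h e K) = uniformPerm N := by
  induction K with
  | zero =>
    simp only [rtopWalk]
    exact PMF.bind_pure _
  | succ K ih =>
    simp only [rtopWalk]
    rw [← PMF.bind_bind, ih, uniform_bind_step]

/-- probability that a fixed card is never chosen. -/
lemma prob_miss (h : 0 < N) (c : Fin N) (K : ℕ) :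
    ∑' l, (wpmf h K) l * (if c ∈ l then 0 else 1) = (((N - 1 : ℕ) : ℝ≥0∞) / N) ^ K := by
  haveI : Nonempty (Fin N) := ⟨⟨0, h⟩⟩
  induction K with
  | zero =>
    rw [wpmf]
    rw [tsum_eq_single ([] : List (Fin N)) (fun l hl => by simp [PMF.pure_apply, hl])]
    simp [PMF.pure_apply]
  | succ K ih =>
    rw [wpmf, expect_bind]
    have inner : ∀ l : List (Fin N),
        (∑' l', ((PMF.uniformOfFintype (Fin N)).map fun c' => l ++ [c']) l' *
          (if c ∈ l' then 0 else 1)) =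
        (if c ∈ l then 0 else 1) * (((N - 1 : ℕ) : ℝ≥0∞) / N) := by
      intro l
      rw [expect_map]
      by_cases hc : c ∈ l
      · rw [if_pos hc, zero_mul]
        have hz : ∀ c' : Fin N, (PMF.uniformOfFintype (Fin N)) c' *
            (if c ∈ l ++ [c'] then (0:ℝ≥0∞) else 1) = 0 := by
          intro c'
          rw [if_pos (by simp [hc]), mul_zero]
        simp only [hz, tsum_zero]
      · rw [if_neg hc, one_mul]
        have heq : ∀ c' : Fin N, (if c ∈ l ++ [c'] then (0:ℝ≥0∞) else 1) =
            (if c' = c then 0 else 1) := by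
          intro c'
          by_cases h' : c' = c
          · rw [if_pos h', if_pos (by simp [h'])]
          · rw [if_neg h', if_neg (by simp [hc, Ne.symm h'])]
        simp only [heq]
        rw [tsum_fintype]
        simp only [PMF.uniformOfFintype_apply, Fintype.card_fin]
        rw [← Finset.sum_erase_add _ _ (Finset.mem_univ c), if_pos rfl, mul_zero, add_zero]
        have hone : ∀ c' ∈ Finset.univ.erase c,
            ((N : ℝ≥0∞))⁻¹ * (if c' = c then (0:ℝ≥0∞) else 1) = (N : ℝ≥0∞)⁻¹ := by
          intro c' hc'
          rw [if_neg (Finset.mem_erase.1 hc').1, mul_one]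
        rw [Finset.sum_congr rfl hone, Finset.sum_const, Finset.card_erase_of_mem
          (Finset.mem_univ c), Finset.card_univ, Fintype.card_fin]
        rw [nsmul_eq_mul, div_eq_mul_inv, mul_comm]
    simp only [inner]
    rw [pow_succ, ← ih, ← ENNReal.tsum_mul_right]
    apply tsum_congr
    intro l
    ring


lemma cover_prob (h : 0 < N) (K : ℕ) :
    ∑' l, (wpmf h K) l * (if ∀ c : Fin N, c ∈ l then 0 else 1) ≤
      (N : ℝ≥0∞) * (((N - 1 : ℕ) : ℝ≥0∞) / N) ^ K := by
  calc ∑' l, (wpmf h K) l * (if ∀ c : Fin N, c ∈ l then 0 else 1)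
      ≤ ∑' l, (wpmf h K) l * ∑' c : Fin N, (if c ∈ l then 0 else 1) := by
        apply ENNReal.tsum_le_tsum
        intro l
        apply mul_le_mul_right
        by_cases hcov : ∀ c : Fin N, c ∈ l
        · rw [if_pos hcov]; exact zero_le
        · rw [if_neg hcov]
          push_neg at hcov
          obtain ⟨c, hc⟩ := hcov
          refine le_trans (le_of_eq ?_)
            (ENNReal.le_tsum (f := fun c1 : Fin N => if c1 ∈ l then (0:ℝ≥0∞) else 1) c)
          rw [if_neg hc]
    _ = ∑' (c : Fin N) (l : List (Fin N)), (wpmf h K) l * (if c ∈ l then 0 else 1) := by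
        rw [← ENNReal.tsum_comm]
        apply tsum_congr
        intro l
        rw [ENNReal.tsum_mul_left]
    _ = ∑' (_ : Fin N), (((N - 1 : ℕ) : ℝ≥0∞) / N) ^ K := by
        apply tsum_congr
        intro c
        exact prob_miss h c K
    _ = (N : ℝ≥0∞) * (((N - 1 : ℕ) : ℝ≥0∞) / N) ^ K := by
        rw [tsum_fintype, Finset.sum_const, Finset.card_univ, Fintype.card_fin, nsmul_eq_mul]

lemma tv_walks (h : 0 < N) (d e : Equiv.Perm (Fin N)) (K : ℕ) :
    tvDist (rtopWalk h d K) (rtopWalk h e K) ≤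
      (N : ℝ≥0∞) * (((N - 1 : ℕ) : ℝ≥0∞) / N) ^ K := by
  rw [rtopWalk_eq_map, rtopWalk_eq_map]
  refine (tv_map_map (wpmf h K) (runC d) (runC e)).trans ?_
  refine le_trans ?_ (cover_prob h K)
  apply ENNReal.tsum_le_tsum
  intro l
  apply mul_le_mul_right
  by_cases hcov : ∀ c : Fin N, c ∈ l
  · rw [if_pos (run_eq_of_cover hcov d e), if_pos hcov]
  · rw [if_neg hcov]
    split <;> simp


end RTT

lemma rtt_numeric (N K : ℕ) (hN : 2 ≤ N) (hK : (2 * (N : ℝ)) * Real.log N ≤ K) :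
    (N : ℝ≥0∞) * (((N - 1 : ℕ) : ℝ≥0∞) / N) ^ K ≤ ENNReal.ofReal (1 / N) := by
  have hN0 : (0 : ℝ) < N := by positivity
  have hx0 : (0 : ℝ) ≤ ((N - 1 : ℕ) : ℝ) / N := by positivity
  have hcast : ((N - 1 : ℕ) : ℝ) = (N : ℝ) - 1 := by
    rw [Nat.cast_sub (by omega)]; norm_num
  -- rewrite LHS as ofReal of a real number
  have h1 : (((N - 1 : ℕ) : ℝ≥0∞) / N) = ENNReal.ofReal (((N - 1 : ℕ) : ℝ) / N) := by
    rw [ENNReal.ofReal_div_of_pos hN0, ENNReal.ofReal_natCast, ENNReal.ofReal_natCast]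
  have h2 : (N : ℝ≥0∞) * (((N - 1 : ℕ) : ℝ≥0∞) / N) ^ K =
      ENNReal.ofReal ((N : ℝ) * (((N - 1 : ℕ) : ℝ) / N) ^ K) := by
    rw [h1, ← ENNReal.ofReal_pow hx0, ← ENNReal.ofReal_natCast N,
      ← ENNReal.ofReal_mul (by positivity)]
  rw [h2]
  apply ENNReal.ofReal_le_ofReal
  -- real inequality
  have hexp1 : ((N - 1 : ℕ) : ℝ) / N ≤ Real.exp (-(1 / N)) := by
    have := Real.add_one_le_exp (-(1 / (N:ℝ)))
    rw [hcast]
    have : (N:ℝ)⁻¹ ≤ 1 := by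
      rw [inv_le_one_iff₀]; right; exact_mod_cast by omega
    calc ((N:ℝ) - 1) / N = 1 - 1/N := by field_simp
      _ ≤ Real.exp (-(1/N)) := by
          have h := Real.add_one_le_exp (-(1 / (N:ℝ)))
          linarith
  have hpow : (((N - 1 : ℕ) : ℝ) / N) ^ K ≤ Real.exp (-(K / N)) := by
    calc (((N - 1 : ℕ) : ℝ) / N) ^ K ≤ (Real.exp (-(1 / N))) ^ K :=
          pow_le_pow_left₀ hx0 hexp1 K
      _ = Real.exp (K * (-(1 / N))) := by rw [← Real.exp_nat_mul]
      _ = Real.exp (-(K / N)) := by ring_nf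
  have hlogN : 0 ≤ Real.log N := Real.log_nonneg (by exact_mod_cast by omega)
  have hKN : 2 * Real.log N ≤ (K : ℝ) / N := by
    rw [le_div_iff₀ hN0]
    calc 2 * Real.log N * N = 2 * (N:ℝ) * Real.log N := by ring
      _ ≤ K := hK
  have hexp2 : Real.exp (-(K / N)) ≤ Real.exp (-(2 * Real.log N)) :=
    Real.exp_le_exp.2 (by linarith)
  have hval : Real.exp (-(2 * Real.log N)) = ((N:ℝ) * N)⁻¹ := by
    rw [Real.exp_neg]
    congr 1
    rw [two_mul, Real.exp_add, Real.exp_log hN0]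
  calc (N : ℝ) * (((N - 1 : ℕ) : ℝ) / N) ^ K
      ≤ (N : ℝ) * ((N:ℝ) * N)⁻¹ := by
        apply mul_le_mul_of_nonneg_left _ (le_of_lt hN0)
        calc (((N - 1 : ℕ) : ℝ) / N) ^ K ≤ Real.exp (-(K / N)) := hpow
          _ ≤ Real.exp (-(2 * Real.log N)) := hexp2
          _ = ((N:ℝ) * N)⁻¹ := hval
    _ = 1 / N := by field_simp


/-- **Convergence of random-to-top to the uniform shuffle.** There is a constant `C > 0` such
that for all `N ≥ 2`, taking `K = ⌈2N·log N⌉` steps of the random-to-top shuffle brings the deck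
within TV distance `C/N` of the uniform distribution on permutations, from any starting deck. -/
theorem rtopWalk_mixes_to_uniform :
    ∃ C : ℝ, 0 < C ∧
      ∀ N : ℕ, (hN : 2 ≤ N) → ∀ d : Equiv.Perm (Fin N),
        tvDist (rtopWalk (by omega : 0 < N) d ⌈(2 * (N : ℝ)) * Real.log N⌉₊)
            (uniformPerm N)
          ≤ ENNReal.ofReal (C / N) := by
  refine ⟨1, one_pos, ?_⟩
  intro N hN d
  have h : 0 < N := by omega
  set K := ⌈(2 * (N : ℝ)) * Real.log N⌉₊ with hK
  have hKge : (2 * (N : ℝ)) * Real.log N ≤ K := Nat.le_ceil _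
  have key : tvDist (rtopWalk (by omega : 0 < N) d K) (uniformPerm N) ≤
      ENNReal.ofReal (1 / N) := by
    rw [← RTT.uniform_eq_mixture (by omega : 0 < N) K]
    apply RTT.tv_bind_le
    intro e
    exact (RTT.tv_walks _ d e K).trans (rtt_numeric N K hN hKge)
  simpa using key
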